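/- Let F = {N^{(β)} : β > 0} be a one-parameter family of positive sequences such that N^{(β₁)}_p ≤ N^{(β₂)}_p for all p whenever 0 < β₁ ≤ β₂, and such that lim_{p→∞}(N^{(β)}_p/p!)^{1/p} = 0 for each β > 0. Then there exists a sequence a = (a_p) with a_0 = 1 such that p ↦ (a_p)^{1/p} is non-increasing, lim_p (a_p)^{1/p} = 0, and for every β > 0: lim_{p→∞} (a_p · p! / N^{(β)}_p)^{1/p} = +∞. In particular a is a uniform bound for F: for each β there is C ≥ 1 with N^{(β)}_p/p! ≤ C a_p for all p. -/
import Mathlib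


open Filter

/-- Given a one-parameter family of positive sequences N^{(β)} (β > 0),
pointwise non-decreasing in β, with (N^{(β)}_p/p!)^{1/p} → 0 for each β > 0, there exists a
positive sequence a with a_0 = 1, p ↦ (a_p)^{1/p} non-increasing and tending to 0, such
that (a_p·p!/N^{(β)}_p)^{1/p} → ∞ for every β > 0; in particular a is a uniform bound:
for each β > 0 there is C ≥ 1 with N^{(β)}_p/p! ≤ C·a_p for all p. -/
theorem stmt16 (N : ℝ → ℕ → ℝ)
    (hpos : ∀ β : ℝ, 0 < β → ∀ p : ℕ, 0 < N β p)
    (hmono : ∀ β₁ β₂ : ℝ, 0 < β₁ → β₁ ≤ β₂ → ∀ p : ℕ, N β₁ p ≤ N β₂ p)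
    (hsmall : ∀ β : ℝ, 0 < β →
      Tendsto (fun p : ℕ => (N β p / (Nat.factorial p : ℝ)) ^ ((1 : ℝ) / p)) atTop (nhds 0)) :
    ∃ a : ℕ → ℝ, a 0 = 1 ∧ (∀ p, 0 < a p) ∧
      (∀ p q : ℕ, 1 ≤ p → p ≤ q → (a q) ^ ((1 : ℝ) / q) ≤ (a p) ^ ((1 : ℝ) / p)) ∧
      Tendsto (fun p : ℕ => (a p) ^ ((1 : ℝ) / p)) atTop (nhds 0) ∧
      (∀ β : ℝ, 0 < β →
        Tendsto (fun p : ℕ => (a p * (Nat.factorial p : ℝ) / N β p) ^ ((1 : ℝ) / p))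
          atTop atTop) ∧
      (∀ β : ℝ, 0 < β → ∃ C : ℝ, 1 ≤ C ∧
        ∀ p : ℕ, N β p / (Nat.factorial p : ℝ) ≤ C * a p) := by
  have hfac : ∀ p : ℕ, (0:ℝ) < (Nat.factorial p : ℝ) := fun p => by
    exact_mod_cast (Nat.factorial_pos p)
  set n : ℝ → ℕ → ℝ := fun β p => (N β p / (Nat.factorial p : ℝ)) ^ ((1 : ℝ) / p) with hn
  have hn_pos : ∀ β : ℝ, 0 < β → ∀ p, 0 < n β p := fun β hβ p =>
    Real.rpow_pos_of_pos (div_pos (hpos β hβ p) (hfac p)) _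
  have hn_mono : ∀ β₁ β₂ : ℝ, 0 < β₁ → β₁ ≤ β₂ → ∀ p, n β₁ p ≤ n β₂ p := by
    intro β₁ β₂ h1 h12 p
    apply Real.rpow_le_rpow (le_of_lt (div_pos (hpos β₁ h1 p) (hfac p)))
    · exact div_le_div_of_nonneg_right (hmono β₁ β₂ h1 h12 p) (hfac p).le
    · positivity
  have hn_pow : ∀ β : ℝ, 0 < β → ∀ p : ℕ, 1 ≤ p →
      (n β p) ^ p = N β p / (Nat.factorial p : ℝ) := by
    intro β hβ p hp
    have hp0 : (p : ℝ) ≠ 0 := by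
      exact_mod_cast Nat.one_le_iff_ne_zero.1 hp
    rw [← Real.rpow_natCast (n β p) p, hn]
    rw [← Real.rpow_mul (le_of_lt (div_pos (hpos β hβ p) (hfac p))),
      one_div_mul_cancel hp0, Real.rpow_one]
  have hβk : ∀ k : ℕ, (0:ℝ) < (k:ℝ) + 1 := fun k => by positivity
  have hbdd : ∀ k p : ℕ, BddAbove (Set.range fun q : ℕ => n ((k:ℝ)+1) (p + q)) := by
    intro k p
    have ht : Tendsto (fun q : ℕ => p + q) atTop atTop :=
      tendsto_atTop_mono (fun q => Nat.le_add_left q p) tendsto_id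
    have h := (hsmall ((k:ℝ)+1) (hβk k)).comp ht
    exact h.bddAbove_range
  set m : ℕ → ℕ → ℝ := fun k p => ⨆ q : ℕ, n ((k:ℝ)+1) (p + q) with hm
  have hm_ge : ∀ k p q : ℕ, p ≤ q → n ((k:ℝ)+1) q ≤ m k p := by
    intro k p q hpq
    have : n ((k:ℝ)+1) (p + (q - p)) ≤ m k p := le_ciSup (hbdd k p) (q - p)
    rwa [Nat.add_sub_cancel' hpq] at this
  have hm_pos : ∀ k p, 0 < m k p := fun k p =>
    lt_of_lt_of_le (hn_pos _ (hβk k) p) (hm_ge k p p le_rfl)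
  have hm_anti : ∀ k, ∀ p p' : ℕ, p ≤ p' → m k p' ≤ m k p := by
    intro k p p' hpp'
    apply ciSup_le
    intro q
    exact hm_ge k p (p' + q) (le_trans hpp' (Nat.le_add_right _ _))
  have hm_tendsto : ∀ k, Tendsto (fun p => m k p) atTop (nhds 0) := by
    intro k
    rw [Metric.tendsto_atTop]
    intro δ hδ
    obtain ⟨P, hP⟩ := (Metric.tendsto_atTop.1 (hsmall ((k:ℝ)+1) (hβk k))) (δ/2) (by linarith)
    refine ⟨P, fun p hp => ?_⟩
    have hle : m k p ≤ δ/2 := by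
      apply ciSup_le
      intro q
      have h2 := hP (p + q) (le_trans hp (Nat.le_add_right _ _))
      rw [Real.dist_eq, sub_zero] at h2
      exact (le_abs_self _).trans h2.le
    rw [Real.dist_eq, sub_zero, abs_of_pos (hm_pos k p)]
    linarith
  set e : ℕ → ℝ := fun p => ⨆ k : ℕ, min (((k:ℝ)+1) * m k p) (1/((k:ℝ)+1)) with he
  have hebdd : ∀ p, BddAbove (Set.range fun k : ℕ => min (((k:ℝ)+1) * m k p) (1/((k:ℝ)+1))) := by
    intro p
    refine ⟨1, ?_⟩
    rintro x ⟨k, rfl⟩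
    refine (min_le_right _ _).trans ?_
    rw [div_le_one (hβk k)]
    linarith [Nat.cast_nonneg (α := ℝ) k]
  have he_pos : ∀ p, 0 < e p := by
    intro p
    refine lt_of_lt_of_le ?_ (le_ciSup (hebdd p) 0)
    have h1 := hm_pos 0 p
    simp only [Nat.cast_zero, zero_add, one_mul, lt_min_iff]
    constructor
    · exact h1
    · norm_num
  have he_anti : ∀ p p' : ℕ, p ≤ p' → e p' ≤ e p := by
    intro p p' hpp'
    apply ciSup_le
    intro k
    refine le_trans ?_ (le_ciSup (hebdd p) k)
    exact min_le_min (mul_le_mul_of_nonneg_left (hm_anti k p p' hpp') (hβk k).le) le_rfl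
  have hkey : ∀ k : ℕ, ∀ᶠ p in atTop, ((k:ℝ)+1) * m k p ≤ e p := by
    intro k
    have hc : (0:ℝ) < 1/(((k:ℝ)+1)^2) := by positivity
    filter_upwards [(hm_tendsto k).eventually_lt_const hc] with p hp
    have hmin : ((k:ℝ)+1) * m k p ≤ 1/((k:ℝ)+1) := by
      rw [← le_div_iff₀' (hβk k)]
      calc m k p ≤ 1/(((k:ℝ)+1)^2) := hp.le
        _ = 1/((k:ℝ)+1) / ((k:ℝ)+1) := by
            rw [div_div]; ring_nf
    calc ((k:ℝ)+1) * m k p = min (((k:ℝ)+1) * m k p) (1/((k:ℝ)+1)) := (min_eq_left hmin).symm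
      _ ≤ e p := le_ciSup (hebdd p) k
  have he_tendsto : Tendsto e atTop (nhds 0) := by
    rw [Metric.tendsto_atTop]
    intro δ hδ
    obtain ⟨K, hK⟩ := exists_nat_one_div_lt (half_pos hδ)
    have hPk : ∀ k : ℕ, ∃ Pk : ℕ, ∀ p ≥ Pk, ((k:ℝ)+1) * m k p ≤ δ/2 := by
      intro k
      have hc : (0:ℝ) < (δ/2)/((k:ℝ)+1) := by positivity
      obtain ⟨Pk, hPk⟩ := (eventually_atTop.1 ((hm_tendsto k).eventually_lt_const hc))
      refine ⟨Pk, fun p hp => ?_⟩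
      have h2 := hPk p hp
      rw [lt_div_iff₀' (hβk k)] at h2
      linarith
    choose P hP using hPk
    refine ⟨(Finset.range (K+1)).sup P, fun p hp => ?_⟩
    have hle : e p ≤ δ/2 := by
      apply ciSup_le
      intro k
      rcases le_or_gt k K with hk | hk
      · refine (min_le_left _ _).trans (hP k p (le_trans ?_ hp))
        exact Finset.le_sup (Finset.mem_range.2 (Nat.lt_succ_of_le hk))
      · refine (min_le_right _ _).trans ?_
        have h3 : 1/((k:ℝ)+1) ≤ 1/((K:ℝ)+1) := by
          apply one_div_le_one_div_of_le (hβk K)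
          have : (K:ℝ) ≤ (k:ℝ) := by exact_mod_cast hk.le
          linarith
        have hK' : 1/((K:ℝ)+1) < δ/2 := hK
        linarith
    rw [Real.dist_eq, sub_zero, abs_of_pos (he_pos p)]
    linarith
  -- the dominating sequence
  set a : ℕ → ℝ := fun p => if p = 0 then 1 else (e p) ^ p with ha
  have ha_pos : ∀ p, 0 < a p := by
    intro p
    by_cases h : p = 0 <;> simp [ha, h, pow_pos (he_pos p)]
  have haroot : ∀ p : ℕ, 1 ≤ p → (a p) ^ ((1:ℝ)/p) = e p := by
    intro p hp
    have hp0 : p ≠ 0 := Nat.one_le_iff_ne_zero.1 hp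
    have hp0' : (p:ℝ) ≠ 0 := by exact_mod_cast hp0
    rw [ha]
    simp only [if_neg hp0]
    rw [← Real.rpow_natCast (e p) p, ← Real.rpow_mul (he_pos p).le,
      mul_one_div_cancel hp0', Real.rpow_one]
  -- the eventual domination: for every k, eventually n β p bounded via e
  refine ⟨a, by simp [ha], ha_pos, ?_, ?_, ?_, ?_⟩
  · -- non-increasing roots
    intro p q hp hpq
    rw [haroot p hp, haroot q (le_trans hp hpq)]
    exact he_anti p q hpq
  · -- roots tend to 0
    apply he_tendsto.congr'
    filter_upwards [eventually_ge_atTop 1] with p hp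
    exact (haroot p hp).symm
  · -- ratio tends to infinity
    intro β hβ
    rw [tendsto_atTop]
    intro M
    set j : ℕ := max ⌈β⌉₊ ⌈M⌉₊ with hj
    have hβj : β ≤ (j:ℝ) + 1 := by
      have h1 : β ≤ (⌈β⌉₊ : ℝ) := Nat.le_ceil β
      have h2 : ((⌈β⌉₊ : ℕ) : ℝ) ≤ (j:ℝ) := by exact_mod_cast le_max_left _ _
      linarith
    have hMj : M ≤ (j:ℝ) + 1 := by
      have h1 : M ≤ (⌈M⌉₊ : ℝ) := Nat.le_ceil M
      have h2 : ((⌈M⌉₊ : ℕ) : ℝ) ≤ (j:ℝ) := by exact_mod_cast le_max_right _ _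
      linarith
    filter_upwards [hkey j, eventually_ge_atTop 1] with p hkp hp1
    have hp0 : p ≠ 0 := Nat.one_le_iff_ne_zero.1 hp1
    have hp0' : (p:ℝ) ≠ 0 := by exact_mod_cast hp0
    -- e p ≥ (j+1) * n β p
    have h1 : n β p ≤ m j p := le_trans (hn_mono β ((j:ℝ)+1) hβ hβj p) (hm_ge j p p le_rfl)
    have h2 : ((j:ℝ)+1) * n β p ≤ e p :=
      le_trans (mul_le_mul_of_nonneg_left h1 (hβk j).le) hkp
    -- hence (j+1)^p * (N β p / p!) ≤ a p
    have h3 : (((j:ℝ)+1) * n β p) ^ p ≤ (e p) ^ p :=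
      pow_le_pow_left₀ (mul_nonneg (hβk j).le (hn_pos β hβ p).le) h2 p
    have h4 : ((j:ℝ)+1)^p * (N β p / (Nat.factorial p : ℝ)) ≤ a p := by
      rw [ha]
      simp only [if_neg hp0]
      calc ((j:ℝ)+1)^p * (N β p / (Nat.factorial p : ℝ))
          = (((j:ℝ)+1) * n β p) ^ p := by rw [mul_pow, hn_pow β hβ p hp1]
        _ ≤ (e p) ^ p := h3
    have hNpos : (0:ℝ) < N β p / (Nat.factorial p : ℝ) := div_pos (hpos β hβ p) (hfac p)
    have h5 : ((j:ℝ)+1)^p ≤ a p * (Nat.factorial p : ℝ) / N β p := by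
      have h6 : ((j:ℝ)+1)^p ≤ a p / (N β p / (Nat.factorial p : ℝ)) := (le_div_iff₀ hNpos).2 h4
      rwa [div_div_eq_mul_div] at h6
    calc M ≤ (j:ℝ)+1 := hMj
      _ = ((((j:ℝ)+1)^p) : ℝ) ^ ((1:ℝ)/p) := by
          rw [← Real.rpow_natCast ((j:ℝ)+1) p, ← Real.rpow_mul (hβk j).le,
            mul_one_div_cancel hp0', Real.rpow_one]
      _ ≤ (a p * (Nat.factorial p : ℝ) / N β p) ^ ((1:ℝ)/p) := by
          apply Real.rpow_le_rpow (by positivity) h5 (by positivity)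
  · -- uniform bound
    intro β hβ
    set j : ℕ := ⌈β⌉₊ with hj
    have hβj : β ≤ (j:ℝ) + 1 := by
      have h1 : β ≤ (⌈β⌉₊ : ℝ) := Nat.le_ceil β
      linarith
    have hev : ∀ᶠ p in atTop, N β p / (Nat.factorial p : ℝ) ≤ a p := by
      filter_upwards [hkey j, eventually_ge_atTop 1] with p hkp hp1
      have hp0 : p ≠ 0 := Nat.one_le_iff_ne_zero.1 hp1
      have h1 : n β p ≤ m j p := le_trans (hn_mono β ((j:ℝ)+1) hβ hβj p) (hm_ge j p p le_rfl)
      have h2 : n β p ≤ e p := by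
        have : m j p ≤ ((j:ℝ)+1) * m j p := by
          nlinarith [hm_pos j p, Nat.cast_nonneg (α := ℝ) j]
        linarith [hkp]
      calc N β p / (Nat.factorial p : ℝ) = (n β p) ^ p := (hn_pow β hβ p hp1).symm
        _ ≤ (e p) ^ p := pow_le_pow_left₀ (hn_pos β hβ p).le h2 p
        _ = a p := by rw [ha]; simp [if_neg hp0]
    obtain ⟨P, hPe⟩ := eventually_atTop.1 hev
    set C : ℝ := 1 + ∑ q ∈ Finset.range P, (N β q / (Nat.factorial q : ℝ)) / a q with hC
    have hterm_nonneg : ∀ q ∈ Finset.range P, 0 ≤ (N β q / (Nat.factorial q : ℝ)) / a q := by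
      intro q _
      exact div_nonneg (div_nonneg (hpos β hβ q).le (hfac q).le) (ha_pos q).le
    have hC1 : 1 ≤ C := by
      rw [hC]
      have := Finset.sum_nonneg hterm_nonneg
      linarith
    refine ⟨C, hC1, fun p => ?_⟩
    rcases lt_or_ge p P with hp | hp
    · have hle : (N β p / (Nat.factorial p : ℝ)) / a p ≤ C := by
        rw [hC]
        have := Finset.single_le_sum hterm_nonneg (Finset.mem_range.2 hp)
        linarith
      calc N β p / (Nat.factorial p : ℝ)
          = ((N β p / (Nat.factorial p : ℝ)) / a p) * a p := by
            rw [div_mul_cancel₀ _ (ha_pos p).ne']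
        _ ≤ C * a p := mul_le_mul_of_nonneg_right hle (ha_pos p).le
    · calc N β p / (Nat.factorial p : ℝ) ≤ a p := hPe p hp
        _ ≤ C * a p := le_mul_of_one_le_left (ha_pos p).le hC1
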